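/- For every prime p > 5, the harmonic number H_{⌊p/6⌋} computed in the field ℤ/pℤ is congruent to 0 modulo p if and only if 4·q_p(2) + 3·q_p(3) ≡ 0 (mod p), where q_p(b) = (b^{p−1} − 1)/p is the Fermat quotient of p to base b. -/

import Mathlib

/-- The harmonic number `H_⌊p/N⌋` computed in `ZMod p`: the sum of the
inverses of `1, 2, …, ⌊p/N⌋` in the field `ℤ/pℤ`. -/
def harmonicMod (p n : ℕ) : ZMod p :=
  ∑ j ∈ Finset.Icc 1 n, ((j : ZMod p))⁻¹

/-- The Fermat quotient `q_p(b) = (b^(p-1) - 1) / p`. -/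
def fermatQuotient (p : ℕ) (b : ℤ) : ℤ :=
  (b ^ (p - 1) - 1) / p

open Finset


lemma two_ne_zero_zmod (p : ℕ) (hp : p.Prime) (hodd : p ≠ 2) : (2 : ZMod p) ≠ 0 := by
  have : ((2:ℕ) : ZMod p) ≠ 0 := by
    rw [Ne, ZMod.natCast_eq_zero_iff]
    exact fun h => hodd ((Nat.prime_dvd_prime_iff_eq hp Nat.prime_two).mp h)
  exact_mod_cast this

lemma Hfull_zero (p : ℕ) (hp : p.Prime) (hodd : p ≠ 2) :
    ∑ j ∈ Finset.Icc 1 (p-1), ((j : ZMod p))⁻¹ = 0 := by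
  haveI : Fact p.Prime := ⟨hp⟩
  have huniv : ∑ x : ZMod p, x = 0 := by
    have h1 : ∑ x : ZMod p, (-x) = ∑ x : ZMod p, x :=
      Fintype.sum_bijective (fun x => -x) neg_involutive.bijective _ _ (by simp)
    have h2 : (2 : ZMod p) * ∑ x : ZMod p, x = 0 := by
      rw [two_mul]
      nth_rewrite 1 [← h1]
      simp [← Finset.sum_add_distrib]
    exact (mul_eq_zero.mp h2).resolve_left (two_ne_zero_zmod p hp hodd)
  have hinv : ∑ x : ZMod p, x⁻¹ = 0 := by
    rw [Fintype.sum_bijective (fun x : ZMod p => x⁻¹) inv_involutive.bijective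
      (fun x : ZMod p => x⁻¹) id (fun x => rfl)]
    simpa using huniv
  rw [← hinv, ← Finset.sum_erase (Finset.univ) (f := fun x : ZMod p => x⁻¹) (a := 0) (by simp)]
  refine Finset.sum_nbij' (fun j => (j : ZMod p)) (fun x => x.val) ?_ ?_ ?_ ?_ ?_
  · intro j hj
    simp only [Finset.mem_Icc] at hj
    simp only [Finset.mem_erase, Finset.mem_univ, and_true]
    rw [Ne, ZMod.natCast_eq_zero_iff]
    intro hd
    have := Nat.le_of_dvd (by omega) hd
    have hp2 := hp.two_le
    omega
  · intro x hx
    simp only [Finset.mem_erase, Finset.mem_univ, and_true] at hx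
    simp only [Finset.mem_Icc]
    have : x.val ≠ 0 := fun h => hx ((ZMod.val_eq_zero x).mp h)
    exact ⟨by omega, Nat.le_sub_one_of_lt (ZMod.val_lt x)⟩
  · intro j hj
    simp only [Finset.mem_Icc] at hj
    exact ZMod.val_cast_of_lt (by omega)
  · intro x _; exact ZMod.natCast_rightInverse x
  · intro j _; rfl

lemma prod_one_add_pmul (p : ℕ) (s : Finset ℕ) (t : ℕ → ZMod (p^2)) :
    ∏ j ∈ s, (1 + (p : ZMod (p^2)) * t j) = 1 + (p : ZMod (p^2)) * ∑ j ∈ s, t j := by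
  have hpp : (p : ZMod (p^2)) * (p : ZMod (p^2)) = 0 := by
    rw [← Nat.cast_mul, ← pow_two, ZMod.natCast_eq_zero_iff]
  classical
  induction s using Finset.induction with
  | empty => simp
  | insert _ _ h ih =>
    rw [Finset.prod_insert h, ih, Finset.sum_insert h]
    ring_nf
    linear_combination (t _ * ∑ j ∈ _, t j) * hpp

lemma pmul_eq_zero (p : ℕ) [NeZero p] (hp0 : 0 < p) (x : ZMod (p^2))
    (h : (p : ZMod (p^2)) * x = 0) :
    (ZMod.castHom (dvd_pow_self p two_ne_zero) (ZMod p)) x = 0 := by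
  haveI : NeZero (p^2) := ⟨pow_ne_zero 2 hp0.ne'⟩
  have hx : ((x.val : ℕ) : ZMod (p^2)) = x := ZMod.natCast_rightInverse x
  have h2 : ((p * x.val : ℕ) : ZMod (p^2)) = 0 := by push_cast [hx]; exact h
  rw [ZMod.natCast_eq_zero_iff] at h2
  have h3 : p * p ∣ p * x.val := by rw [← pow_two]; exact h2
  have hdvd : p ∣ x.val := (mul_dvd_mul_iff_left hp0.ne').mp h3
  have heq : (ZMod.castHom (dvd_pow_self p two_ne_zero) (ZMod p)) x = ((x.val : ℕ) : ZMod p) := by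
    rw [ZMod.castHom_apply]
    exact (ZMod.natCast_val x).symm
  rw [heq, ZMod.natCast_eq_zero_iff]
  exact hdvd

lemma key (p : ℕ) (hp : p.Prime) (a : ℕ) (ha : ¬ p ∣ a) :
    (a : ZMod p) * ((fermatQuotient p (a : ℤ) : ℤ) : ZMod p) =
      ∑ j ∈ Finset.Icc 1 (p-1), ((a * j / p : ℕ) : ZMod p) * ((j : ZMod p))⁻¹ := by
  haveI : Fact p.Prime := ⟨hp⟩
  have hp0 : 0 < p := hp.pos
  haveI : NeZero (p^2) := ⟨pow_ne_zero 2 hp0.ne'⟩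
  set s := Finset.Icc 1 (p-1) with hs
  have hjmem : ∀ j ∈ s, ¬ p ∣ j := by
    intro j hj hdvd
    rw [hs, Finset.mem_Icc] at hj
    have := Nat.le_of_dvd (by omega) hdvd
    omega
  have haj : ∀ j ∈ s, ¬ p ∣ a * j := by
    intro j hj hdvd
    rcases (Nat.Prime.dvd_mul hp).mp hdvd with h | h
    · exact ha h
    · exact hjmem j hj h
  -- units mod p^2
  have hrunit : ∀ j ∈ s, IsUnit ((a * j % p : ℕ) : ZMod (p^2)) := by
    intro j hj
    rw [ZMod.isUnit_iff_coprime]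
    refine Nat.Coprime.pow_right 2 ?_
    rw [Nat.coprime_comm]
    exact (hp.coprime_iff_not_dvd).mpr (by
      rw [Nat.dvd_mod_iff (dvd_refl p)]
      exact haj j hj)
  have hjunit : ∀ j ∈ s, IsUnit ((j : ℕ) : ZMod (p^2)) := by
    intro j hj
    rw [ZMod.isUnit_iff_coprime]
    refine Nat.Coprime.pow_right 2 ?_
    rw [Nat.coprime_comm]
    exact (hp.coprime_iff_not_dvd).mpr (hjmem j hj)
  -- step identity
  have hstep : ∀ j ∈ s, ((a : ZMod (p^2)) * (j : ZMod (p^2))) =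
      ((a * j % p : ℕ) : ZMod (p^2)) *
        (1 + (p : ZMod (p^2)) * (((a * j / p : ℕ) : ZMod (p^2)) *
          (((a * j % p : ℕ) : ZMod (p^2)))⁻¹)) := by
    intro j hj
    have hdm : p * (a * j / p) + a * j % p = a * j := Nat.div_add_mod (a * j) p
    have hcast : ((a : ZMod (p^2)) * (j : ZMod (p^2))) =
        ((a * j % p : ℕ) : ZMod (p^2)) + (p : ZMod (p^2)) * ((a * j / p : ℕ) : ZMod (p^2)) := by
      have := congrArg (fun n : ℕ => (n : ZMod (p^2))) hdm
      push_cast at this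
      linear_combination -this
    rw [hcast]
    linear_combination ((p : ZMod (p^2)) * ((a * j / p : ℕ) : ZMod (p^2))) *
      (ZMod.mul_inv_of_unit _ (hrunit j hj)).symm
  -- product of both sides
  have hprod : (a : ZMod (p^2))^(p-1) * ∏ j ∈ s, ((j : ℕ) : ZMod (p^2)) =
      (∏ j ∈ s, ((a * j % p : ℕ) : ZMod (p^2))) *
        (1 + (p : ZMod (p^2)) * ∑ j ∈ s, (((a * j / p : ℕ) : ZMod (p^2)) *
          (((a * j % p : ℕ) : ZMod (p^2)))⁻¹)) := by
    rw [← prod_one_add_pmul, ← Finset.prod_mul_distrib]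
    have hcard : s.card = p - 1 := by rw [hs, Nat.card_Icc]; omega
    rw [← Finset.prod_congr rfl hstep, Finset.prod_mul_distrib, Finset.prod_const, hcard]
  -- permutation
  have hperm : (∏ j ∈ s, ((a * j % p : ℕ) : ZMod (p^2))) = ∏ j ∈ s, ((j : ℕ) : ZMod (p^2)) := by
    have ha' : (a : ZMod p) ≠ 0 := by
      rw [Ne, ZMod.natCast_eq_zero_iff]; exact ha
    have hinj : Set.InjOn (fun j => a * j % p) s := by
      intro x hx y hy hxy
      simp only at hxy
      have hcast : ((a * x % p : ℕ) : ZMod p) = ((a * y % p : ℕ) : ZMod p) := by rw [hxy]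
      rw [ZMod.natCast_mod, ZMod.natCast_mod] at hcast
      push_cast at hcast
      have := mul_left_cancel₀ ha' hcast
      rw [hs, Finset.mem_coe, Finset.mem_Icc] at hx hy
      have hx' := ZMod.val_cast_of_lt (show x < p by omega)
      have hy' := ZMod.val_cast_of_lt (show y < p by omega)
      rw [← hx', ← hy', this]
    have himg : s.image (fun j => a * j % p) = s := by
      apply Finset.eq_of_subset_of_card_le
      · intro k hk
        rw [Finset.mem_image] at hk
        obtain ⟨j, hj, rfl⟩ := hk
        have h1 : a * j % p < p := Nat.mod_lt _ hp0
        have h2 : a * j % p ≠ 0 := by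
          intro h0
          exact haj j hj (Nat.dvd_of_mod_eq_zero h0)
        rw [hs, Finset.mem_Icc]
        omega
      · rw [Finset.card_image_of_injOn hinj]
    calc ∏ j ∈ s, ((a * j % p : ℕ) : ZMod (p^2))
        = ∏ k ∈ s.image (fun j => a * j % p), ((k : ℕ) : ZMod (p^2)) :=
          (Finset.prod_image (fun x hx y hy => hinj hx hy)).symm
      _ = ∏ j ∈ s, ((j : ℕ) : ZMod (p^2)) := by rw [himg]
  have hPunit : IsUnit (∏ j ∈ s, ((j : ℕ) : ZMod (p^2))) :=
    Finset.prod_induction _ IsUnit (fun a b ha hb => ha.mul hb) isUnit_one hjunit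
  set S := ∑ j ∈ s, (((a * j / p : ℕ) : ZMod (p^2)) * (((a * j % p : ℕ) : ZMod (p^2)))⁻¹) with hS
  have hmain : (a : ZMod (p^2))^(p-1) = 1 + (p : ZMod (p^2)) * S := by
    have h1 : (∏ j ∈ s, ((j : ℕ) : ZMod (p^2))) * ((a : ZMod (p^2))^(p-1))
        = (∏ j ∈ s, ((j : ℕ) : ZMod (p^2))) * (1 + (p : ZMod (p^2)) * S) := by
      rw [mul_comm _ ((a : ZMod (p^2))^(p-1)), hprod, hperm, hS]
    exact hPunit.mul_left_cancel h1
  have ha' : (a : ZMod p) ≠ 0 := by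
    rw [Ne, ZMod.natCast_eq_zero_iff]; exact ha
  have hdvd : (p : ℤ) ∣ (a : ℤ)^(p-1) - 1 := by
    rw [← ZMod.intCast_zmod_eq_zero_iff_dvd]
    push_cast
    rw [ZMod.pow_card_sub_one_eq_one ha']
    ring
  have hfq : ((a : ℤ))^(p-1) = 1 + (p : ℤ) * fermatQuotient p (a : ℤ) := by
    unfold fermatQuotient
    rw [Int.mul_ediv_cancel' hdvd]
    ring
  have hcast2 : (a : ZMod (p^2))^(p-1)
      = 1 + (p : ZMod (p^2)) * ((fermatQuotient p (a : ℤ) : ℤ) : ZMod (p^2)) := by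
    have h := congrArg (fun z : ℤ => (z : ZMod (p^2))) hfq
    push_cast at h
    exact_mod_cast h
  have hzero : (p : ZMod (p^2)) * (((fermatQuotient p (a : ℤ) : ℤ) : ZMod (p^2)) - S) = 0 := by
    have h := hcast2.symm.trans hmain
    linear_combination h
  haveI : NeZero p := ⟨hp0.ne'⟩
  have hmap := pmul_eq_zero p hp0 _ hzero
  set f := ZMod.castHom (dvd_pow_self p two_ne_zero) (ZMod p) with hf
  rw [map_sub, sub_eq_zero, map_intCast] at hmap
  have hfin : ∀ j ∈ s, f ((((a * j % p : ℕ) : ZMod (p^2)))⁻¹) = (((a : ZMod p) * j)⁻¹) := by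
    intro j hj
    have h1 : ((a*j%p : ℕ) : ZMod (p^2)) * (((a*j%p : ℕ) : ZMod (p^2)))⁻¹ = 1 :=
      ZMod.mul_inv_of_unit _ (hrunit j hj)
    have h2 := congrArg f h1
    rw [map_mul, map_one, map_natCast] at h2
    have h3 : ((a*j%p : ℕ) : ZMod p) = (a : ZMod p) * j := by
      rw [ZMod.natCast_mod]; push_cast; ring
    rw [h3] at h2
    exact eq_inv_of_mul_eq_one_right h2
  have hfS : f S = ∑ j ∈ s, ((a*j/p : ℕ) : ZMod p) * ((a : ZMod p) * j)⁻¹ := by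
    rw [hS, map_sum]
    refine Finset.sum_congr rfl fun j hj => ?_
    rw [map_mul, map_natCast, hfin j hj]
  rw [hfS] at hmap
  rw [hmap, Finset.mul_sum]
  refine Finset.sum_congr rfl fun j hj => ?_
  rw [mul_inv]
  have hc := mul_inv_cancel₀ ha'
  linear_combination ((a*j/p : ℕ) : ZMod p) * ((j : ZMod p))⁻¹ * hc

lemma floor_count (p a j : ℕ) (hp : p.Prime) (ha : ¬ p ∣ a) (hj1 : 1 ≤ j) (hj2 : j ≤ p - 1) :
    a * j / p = ∑ k ∈ Finset.Icc 1 (a-1), (if k * p / a < j then 1 else 0) := by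
  have hp0 : 0 < p := hp.pos
  have ha0 : 0 < a := Nat.pos_of_ne_zero (fun h => ha (h ▸ dvd_zero p))
  have haj : ¬ p ∣ a * j := by
    intro hdvd
    rcases (Nat.Prime.dvd_mul hp).mp hdvd with h | h
    · exact ha h
    · have := Nat.le_of_dvd (by omega) h; omega
  have hiff : ∀ k, (k * p / a < j ↔ k ≤ a * j / p) := by
    intro k
    rw [Nat.le_div_iff_mul_le hp0, Nat.div_lt_iff_lt_mul ha0]
    have hcomm : j * a = a * j := Nat.mul_comm j a
    constructor
    · intro h; omega
    · intro h
      rcases Nat.lt_or_ge (k * p) (j * a) with h' | h'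
      · exact h'
      · have heq : k * p = a * j := by omega
        exact absurd ⟨k, by rw [← heq, Nat.mul_comm]⟩ haj
  have hle : a * j / p ≤ a - 1 := by
    have : a * j / p < a := by
      rw [Nat.div_lt_iff_lt_mul hp0]
      have hjp : j < p := by omega
      have h1 : a * j < a * p := (Nat.mul_lt_mul_left ha0).mpr hjp
      omega
    omega
  rw [← Finset.card_filter]
  have : Finset.filter (fun k => k * p / a < j) (Finset.Icc 1 (a-1)) = Finset.Icc 1 (a * j / p) := by
    ext k
    simp only [Finset.mem_filter, Finset.mem_Icc, hiff]
    omega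
  rw [this, Nat.card_Icc, Nat.add_sub_cancel]

lemma tail_sum (p : ℕ) (hp : p.Prime) (hodd : p ≠ 2) (m : ℕ) (hm : m ≤ p - 1) :
    ∑ j ∈ Finset.Ioc m (p-1), ((j : ZMod p))⁻¹ = - harmonicMod p m := by
  have h := Hfull_zero p hp hodd
  rw [show Finset.Icc 1 (p-1) = Finset.Ioc 0 (p-1) from by rw [← Finset.Icc_add_one_left_eq_Ioc, zero_add]] at h
  rw [← Finset.sum_Ioc_consecutive _ (Nat.zero_le m) hm] at h
  unfold harmonicMod
  rw [show Finset.Icc 1 m = Finset.Ioc 0 m from by rw [← Finset.Icc_add_one_left_eq_Ioc, zero_add]]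
  linear_combination h

lemma symm_H (p : ℕ) (hp : p.Prime) (hodd : p ≠ 2) (m : ℕ) (hm : m ≤ p - 1) :
    harmonicMod p (p - 1 - m) = harmonicMod p m := by
  haveI : Fact p.Prime := ⟨hp⟩
  have hp0 : 0 < p := hp.pos
  have ht := tail_sum p hp hodd m hm
  have h2 : ∑ j ∈ Finset.Ioc m (p-1), ((j : ZMod p))⁻¹
      = ∑ i ∈ Finset.Icc 1 (p-1-m), (((p - i : ℕ) : ZMod p))⁻¹ := by
    refine Finset.sum_nbij' (fun j => p - j) (fun i => p - i) ?_ ?_ ?_ ?_ ?_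
    · intro x hx; simp only [Finset.mem_Ioc] at hx; simp only [Finset.mem_Icc]; omega
    · intro x hx; simp only [Finset.mem_Icc] at hx; simp only [Finset.mem_Ioc]; omega
    · intro x hx; simp only [Finset.mem_Ioc] at hx; omega
    · intro x hx; simp only [Finset.mem_Icc] at hx; omega
    · intro x hx; simp only [Finset.mem_Ioc] at hx
      have hxx : p - (p - x) = x := by omega
      rw [hxx]
  have h3 : ∑ i ∈ Finset.Icc 1 (p-1-m), (((p - i : ℕ) : ZMod p))⁻¹
      = - harmonicMod p (p - 1 - m) := by
    unfold harmonicMod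
    rw [← Finset.sum_neg_distrib]
    refine Finset.sum_congr rfl fun i hi => ?_
    rw [Finset.mem_Icc] at hi
    have hip : i ≤ p := by omega
    have hcast : ((p - i : ℕ) : ZMod p) = -(i : ZMod p) := by
      push_cast [Nat.cast_sub hip]
      rw [ZMod.natCast_self]
      ring
    rw [hcast, inv_neg]
  rw [h2, h3] at ht
  exact neg_injective ht

lemma main_id (p a : ℕ) (hp : p.Prime) (hodd : p ≠ 2) (ha : ¬ p ∣ a) :
    (a : ZMod p) * ((fermatQuotient p (a : ℤ) : ℤ) : ZMod p)
      = - ∑ k ∈ Finset.Icc 1 (a-1), harmonicMod p (k * p / a) := by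
  have hp0 : 0 < p := hp.pos
  have ha0 : 0 < a := Nat.pos_of_ne_zero (fun h => ha (h ▸ dvd_zero p))
  rw [key p hp a ha]
  have step1 : ∀ j ∈ Finset.Icc 1 (p-1),
      ((a * j / p : ℕ) : ZMod p) * ((j : ZMod p))⁻¹
        = ∑ k ∈ Finset.Icc 1 (a-1), (if k * p / a < j then ((j : ZMod p))⁻¹ else 0) := by
    intro j hj
    rw [Finset.mem_Icc] at hj
    rw [floor_count p a j hp ha hj.1 hj.2]
    push_cast
    rw [Finset.sum_mul]
    refine Finset.sum_congr rfl fun k _ => ?_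
    split <;> simp
  rw [Finset.sum_congr rfl step1, Finset.sum_comm]
  rw [← Finset.sum_neg_distrib]
  refine Finset.sum_congr rfl fun k hk => ?_
  rw [Finset.mem_Icc] at hk
  have hm : k * p / a ≤ p - 1 := by
    have h1 : k * p < a * p := by
      have := (Nat.mul_lt_mul_right hp0).mpr (show k < a by omega)
      omega
    have h2 : k * p / a < p := by
      rw [Nat.div_lt_iff_lt_mul ha0]
      have : p * a = a * p := Nat.mul_comm p a
      omega
    omega
  rw [← tail_sum p hp hodd _ hm]
  rw [← Finset.sum_filter]
  congr 1
  ext x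
  simp only [Finset.mem_filter, Finset.mem_Icc, Finset.mem_Ioc]
  constructor
  · rintro ⟨⟨_, h2⟩, h3⟩; exact ⟨h3, h2⟩
  · rintro ⟨h1, h2⟩
    exact ⟨⟨Nat.lt_of_le_of_lt (Nat.zero_le _) h1, h2⟩, h1⟩

lemma fq_spec (p : ℕ) (hp : p.Prime) (b : ℕ) (hb : ¬ p ∣ b) :
    ((b : ℤ))^(p-1) = 1 + (p : ℤ) * fermatQuotient p (b : ℤ) := by
  haveI : Fact p.Prime := ⟨hp⟩
  have hb' : (b : ZMod p) ≠ 0 := by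
    rw [Ne, ZMod.natCast_eq_zero_iff]; exact hb
  have hdvd : (p : ℤ) ∣ (b : ℤ)^(p-1) - 1 := by
    rw [← ZMod.intCast_zmod_eq_zero_iff_dvd]
    push_cast
    rw [ZMod.pow_card_sub_one_eq_one hb']
    ring
  unfold fermatQuotient
  rw [Int.mul_ediv_cancel' hdvd]
  ring

theorem harmonic_zero_iff_fermat_quotient (p : ℕ) (hp : p.Prime) (h5 : 5 < p) :
    harmonicMod p (p / 6) = 0 ↔
      4 * fermatQuotient p 2 + 3 * fermatQuotient p 3 ≡ 0 [ZMOD p] := by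
  haveI : Fact p.Prime := ⟨hp⟩
  have hodd : p ≠ 2 := by omega
  have h2 : ¬ p ∣ 2 := fun h => by
    have hle := Nat.le_of_dvd (by norm_num : 0 < 2) h; omega
  have h3 : ¬ p ∣ 3 := fun h => by
    have hle := Nat.le_of_dvd (by norm_num : 0 < 3) h; omega
  have h6 : ¬ p ∣ 6 := fun h => by
    have hle := Nat.le_of_dvd (by norm_num : 0 < 6) h
    have hp6 : p = 6 := by omega
    rw [hp6] at hp
    norm_num at hp
  have hm2 : p % 2 = 1 := by
    have hne : ¬ Even p := fun he => hodd ((Nat.Prime.even_iff hp).mp he)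
    rw [Nat.even_iff] at hne; omega
  have hm3 : p % 3 = 1 ∨ p % 3 = 2 := by
    have : p % 3 ≠ 0 := fun h => by
      have h3p := (Nat.prime_dvd_prime_iff_eq Nat.prime_three hp).mp (Nat.dvd_of_mod_eq_zero h)
      omega
    omega
  have E2 := main_id p 2 hp hodd h2
  have E3 := main_id p 3 hp hodd h3
  have E6 := main_id p 6 hp hodd h6
  have hIcc1 : Finset.Icc 1 (2-1) = {1} := rfl
  have hIcc2 : Finset.Icc 1 (3-1) = {1, 2} := by decide
  have hIcc5 : Finset.Icc 1 (6-1) = {1, 2, 3, 4, 5} := by decide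
  rw [hIcc1, Finset.sum_singleton] at E2
  rw [hIcc2] at E3
  rw [hIcc5] at E6
  rw [Finset.sum_insert (by decide), Finset.sum_singleton] at E3
  rw [Finset.sum_insert (by decide), Finset.sum_insert (by decide),
    Finset.sum_insert (by decide), Finset.sum_insert (by decide),
    Finset.sum_singleton] at E6
  -- index arithmetic
  have i1 : 1 * p / 2 = p / 2 := by omega
  have i2 : 1 * p / 3 = p / 3 := by omega
  have i3 : 2 * p / 3 = p - 1 - p / 3 := by omega
  have i4 : 1 * p / 6 = p / 6 := by omega
  have i5 : 2 * p / 6 = p / 3 := by omega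
  have i6 : 3 * p / 6 = p / 2 := by omega
  have i7 : 4 * p / 6 = p - 1 - p / 3 := by omega
  have i8 : 5 * p / 6 = p - 1 - p / 6 := by omega
  have s3 : harmonicMod p (p - 1 - p / 3) = harmonicMod p (p / 3) :=
    symm_H p hp hodd (p / 3) (by omega)
  have s6 : harmonicMod p (p - 1 - p / 6) = harmonicMod p (p / 6) :=
    symm_H p hp hodd (p / 6) (by omega)
  rw [i1] at E2
  rw [i2, i3, s3] at E3
  rw [i4, i5, i6, i7, i8, s3, s6] at E6
  norm_num at E2 E3 E6
  -- Fermat quotient relation q6 = q2 + q3 + p q2 q3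
  have e2 : (2:ℤ)^(p-1) = 1 + (p:ℤ) * fermatQuotient p 2 := by
    have := fq_spec p hp 2 h2; norm_num at this; exact this
  have e3 : (3:ℤ)^(p-1) = 1 + (p:ℤ) * fermatQuotient p 3 := by
    have := fq_spec p hp 3 h3; norm_num at this; exact this
  have e6 : (6:ℤ)^(p-1) = 1 + (p:ℤ) * fermatQuotient p 6 := by
    have := fq_spec p hp 6 h6; norm_num at this; exact this
  have hq6 : fermatQuotient p 6 = fermatQuotient p 2 + fermatQuotient p 3
      + p * (fermatQuotient p 2 * fermatQuotient p 3) := by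
    have hp0 : (p : ℤ) ≠ 0 := by exact_mod_cast hp.pos.ne'
    apply mul_left_cancel₀ hp0
    have hmulpow : (6:ℤ)^(p-1) = 2^(p-1) * 3^(p-1) := by
      rw [← mul_pow]; norm_num
    linear_combination hmulpow - e6 + (3:ℤ)^(p-1) * e2 + (1 + (p:ℤ) * fermatQuotient p 2) * e3
  have hQ6 : ((fermatQuotient p 6 : ℤ) : ZMod p)
      = ((fermatQuotient p 2 : ℤ) : ZMod p) + ((fermatQuotient p 3 : ℤ) : ZMod p) := by
    rw [hq6]; push_cast; rw [ZMod.natCast_self]; ring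
  have hkey : (2 : ZMod p) * harmonicMod p (p / 6)
      = -(4 * ((fermatQuotient p 2 : ℤ) : ZMod p) + 3 * ((fermatQuotient p 3 : ℤ) : ZMod p)) := by
    linear_combination E6 - E2 - E3 - 6 * hQ6
  have h2Z : (2 : ZMod p) ≠ 0 := two_ne_zero_zmod p hp hodd
  constructor
  · intro h
    rw [h, mul_zero] at hkey
    have hX : ((4 * fermatQuotient p 2 + 3 * fermatQuotient p 3 : ℤ) : ZMod p) = 0 := by
      push_cast
      linear_combination hkey
    exact Int.modEq_zero_iff_dvd.mpr ((ZMod.intCast_zmod_eq_zero_iff_dvd _ p).mp hX)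
  · intro h
    have hX : ((4 * fermatQuotient p 2 + 3 * fermatQuotient p 3 : ℤ) : ZMod p) = 0 :=
      (ZMod.intCast_zmod_eq_zero_iff_dvd _ p).mpr (Int.modEq_zero_iff_dvd.mp h)
    push_cast at hX
    have hz : (2 : ZMod p) * harmonicMod p (p / 6) = 0 := by
      rw [hkey]
      linear_combination -hX
    exact (mul_eq_zero.mp hz).resolve_left h2Z
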